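/- The homology of the U = 1 lattice complex is one-dimensional: the 𝔽-chain complex C̄ with C̄_k spanned by the pairs [K,E] with K ∈ Char(𝔰), E ⊆ V, |E| = k, and differential ∂̄[K,E] = Σ_{v∈E} ([K, E∖{v}] + [K + 2v*, E∖{v}]) satisfies H_0(C̄) ≅ 𝔽 and H_k(C̄) = 0 for all k > 0. -/

import Mathlib

open Finset

variable {V : Type*}

/-- `M` is negative definite: `xᵀMx < 0` for every nonzero `x ∈ ℝ^V`. -/
def NegDef [Fintype V] (M : V → V → ℤ) : Prop :=
  ∀ x : V → ℝ, x ≠ 0 → (∑ v, ∑ w, (M v w : ℝ) * x v * x w) < 0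

/-- `K` is a characteristic vector for `M`: `K(v) ≡ v·v (mod 2)` for all `v`. -/
def IsChar (M : V → V → ℤ) (K : V → ℤ) : Prop :=
  ∀ v, Int.ModEq 2 (K v) (M v v)

/-- `f(K, I) = (1/2)(Σ_{v∈I} K(v) + (Σ_{v∈I} v)·(Σ_{v∈I} v))` (an exact integer division
for characteristic `K`). -/
def latF (M : V → V → ℤ) (K : V → ℤ) (I : Finset V) : ℤ :=
  ((∑ v ∈ I, K v) + ∑ v ∈ I, ∑ w ∈ I, M v w) / 2

/-- `g(K, E) = min_{I ⊆ E} f(K, I)`. -/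
def latG (M : V → V → ℤ) (K : V → ℤ) (E : Finset V) : ℤ :=
  (E.powerset.image (latF M K)).min'
    ⟨_, Finset.mem_image_of_mem _ (Finset.empty_mem_powerset E)⟩

/-- `B_v(K, E) = min { f(K, I) : v ∈ I ⊆ E }` (for `v ∈ E`). -/
def latB [DecidableEq V] (M : V → V → ℤ) (K : V → ℤ) (E : Finset V) (v : V) : ℤ :=
  ((E.erase v).powerset.image (fun I => latF M K (insert v I))).min'
    ⟨_, Finset.mem_image_of_mem _ (Finset.empty_mem_powerset _)⟩

/-- `a_v(K,E) = A_v(K,E) - g(K,E) = g(K, E∖{v}) - g(K,E)`. -/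
def lata [DecidableEq V] (M : V → V → ℤ) (K : V → ℤ) (E : Finset V) (v : V) : ℤ :=
  latG M K (E.erase v) - latG M K E

/-- `b_v(K,E) = B_v(K,E) - g(K,E)`. -/
def latb [DecidableEq V] (M : V → V → ℤ) (K : V → ℤ) (E : Finset V) (v : V) : ℤ :=
  latB M K E v - latG M K E

/-- Membership in the spin^c equivalence class `Char(𝔰)` determined by `K₀`:
`K = K₀ + Σ_v 2 n_v v*`. -/
def CharCl [Fintype V] (M : V → V → ℤ) (K₀ : V → ℤ) (K : V → ℤ) : Prop :=
  ∃ n : V → ℤ, ∀ w, K w = K₀ w + 2 * ∑ v, n v * M v w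

lemma charCl_addDual [Fintype V] [DecidableEq V] (M : V → V → ℤ) (K₀ K : V → ℤ)
    (h : CharCl M K₀ K) (v : V) : CharCl M K₀ (fun w => K w + 2 * M v w) := by
  obtain ⟨n, hn⟩ := h
  refine ⟨fun u => n u + if u = v then 1 else 0, fun w => ?_⟩
  have hs : ∑ u, (n u + if u = v then 1 else 0) * M u w
      = (∑ u, n u * M u w) + M v w := by
    simp [add_mul, Finset.sum_add_distrib, ite_mul]
  show K w + 2 * M v w = K₀ w + 2 * ∑ u, (n u + if u = v then 1 else 0) * M u w
  rw [hn w, hs]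
  ring

/-- The `U = 1` chain group in δ-grading `k`: the `𝔽`-vector space spanned by the pairs
`[K,E]` with `K ∈ Char(𝔰)` and `|E| = k`. -/
abbrev Cbar [Fintype V] (M : V → V → ℤ) (K₀ : V → ℤ) (k : ℕ) : Type _ :=
  ({K : V → ℤ // CharCl M K₀ K} × {E : Finset V // E.card = k}) →₀ ZMod 2

/-- The `U = 1` differential `∂̄[K,E] = Σ_{v∈E} ([K,E∖{v}] + [K+2v*,E∖{v}])`. -/
noncomputable def dbar [Fintype V] [DecidableEq V] (M : V → V → ℤ) (K₀ : V → ℤ) (k : ℕ) :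
    Cbar M K₀ (k + 1) →ₗ[ZMod 2] Cbar M K₀ k :=
  Finsupp.lift (Cbar M K₀ k) (ZMod 2)
    ({K : V → ℤ // CharCl M K₀ K} × {E : Finset V // E.card = k + 1}) fun g =>
    ∑ v ∈ g.2.1.attach,
      (Finsupp.single
          (g.1, ⟨g.2.1.erase v.1, by rw [Finset.card_erase_of_mem v.2, g.2.2]; omega⟩) 1
       + Finsupp.single
          (⟨fun w => g.1.1 w + 2 * M v.1 w, charCl_addDual M K₀ g.1.1 g.1.2 v.1⟩,
           ⟨g.2.1.erase v.1, by rw [Finset.card_erase_of_mem v.2, g.2.2]; omega⟩) 1)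


/-! ### Auxiliary: a model complex and an explicit contracting homotopy -/

section Aux
open Function


section Model
variable {V : Type*} [Fintype V] [DecidableEq V]

abbrev Mdl (V : Type*) : Type _ := ((V → ℤ) × Finset V) →₀ ZMod 2

lemma char2 {W : Type*} [AddCommMonoid W] [Module (ZMod 2) W] (x : W) : x + x = 0 := by
  have h : (2 : ZMod 2) • x = 0 := by
    have : (2 : ZMod 2) = 0 := rfl
    simp [this]
  simpa [two_smul] using h

lemma Ico_succ_top' {a b : ℤ} (h : a ≤ b) :
    Finset.Ico a (b+1) = insert b (Finset.Ico a b) := by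
  ext x; simp only [Finset.mem_Ico, Finset.mem_insert]; omega

noncomputable def seg (t : ℤ) : Finset ℤ := if 0 ≤ t then Finset.Ico 0 t else Finset.Ico t 0

lemma seg_zero : seg 0 = ∅ := by simp [seg]

section Char2W
variable {W : Type*} [AddCommMonoid W] [Module (ZMod 2) W] (f : ℤ → W)

lemma sum_Ico_pair (a : ℤ) :
    ∀ b, a ≤ b → ((∑ m ∈ Finset.Ico a b, f m) + ∑ m ∈ Finset.Ico a b, f (m + 1))
      = f a + f b := by
  refine Int.le_induction ?_ ?_
  · simpa using (char2 (f a)).symm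
  · intro n hn ih
    rw [Ico_succ_top' hn, Finset.sum_insert (by simp), Finset.sum_insert (by simp)]
    calc (f n + ∑ m ∈ Finset.Ico a n, f m) + (f (n + 1) + ∑ m ∈ Finset.Ico a n, f (m + 1))
        = ((∑ m ∈ Finset.Ico a n, f m) + ∑ m ∈ Finset.Ico a n, f (m + 1)) + f n + f (n + 1) := by
          abel
      _ = (f a + f n) + f n + f (n + 1) := by rw [ih]
      _ = f a + (f n + f n) + f (n + 1) := by abel
      _ = f a + f (n + 1) := by rw [char2]; abel

/-- Key telescoping: over a char-2 module, edges of `seg t` have boundary `f 0 + f t`. -/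
lemma sum_seg_pair (t : ℤ) :
    ((∑ m ∈ seg t, f m) + ∑ m ∈ seg t, f (m + 1)) = f 0 + f t := by
  rcases le_or_gt 0 t with h | h
  · rw [seg, if_pos h]; exact sum_Ico_pair f 0 t h
  · rw [seg, if_neg (by omega)]
    rw [sum_Ico_pair f t 0 (by omega)]; abel

lemma sum_seg_succ (t : ℤ) :
    ((∑ m ∈ seg t, f m) + ∑ m ∈ seg (t + 1), f m) = f t := by
  rcases le_or_gt 0 t with h | h
  · rw [seg, if_pos h, seg, if_pos (by omega), Ico_succ_top' h,
      Finset.sum_insert (by simp)]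
    calc (∑ m ∈ Finset.Ico 0 t, f m) + (f t + ∑ m ∈ Finset.Ico 0 t, f m)
        = ((∑ m ∈ Finset.Ico 0 t, f m) + ∑ m ∈ Finset.Ico 0 t, f m) + f t := by abel
      _ = f t := by rw [char2]; abel
  · have h2 : (t : ℤ) ≤ t := le_refl t
    have hbot : Finset.Ico t 0 = insert t (Finset.Ico (t+1) 0) := by
      ext x; simp only [Finset.mem_Ico, Finset.mem_insert]; omega
    rw [seg, if_neg (by omega), hbot, Finset.sum_insert (by simp)]
    have hseg : seg (t + 1) = Finset.Ico (t+1) 0 := by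
      rcases eq_or_lt_of_le (show t + 1 ≤ 0 by omega) with h1 | h1
      · rw [seg, ← h1]; simp
      · rw [seg, if_neg (by omega)]
    rw [hseg]
    calc f t + (∑ m ∈ Finset.Ico (t+1) 0, f m) + ∑ m ∈ Finset.Ico (t+1) 0, f m
        = f t + ((∑ m ∈ Finset.Ico (t+1) 0, f m) + ∑ m ∈ Finset.Ico (t+1) 0, f m) := by abel
      _ = f t := by rw [char2]; abel

end Char2W
end Model

section Model2
variable {V : Type*} [Fintype V] [DecidableEq V]

noncomputable def dm (V : Type*) [DecidableEq V] : Mdl V →ₗ[ZMod 2] Mdl V :=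
  Finsupp.lift (Mdl V) (ZMod 2) _ fun b =>
    ∑ v ∈ b.2, (Finsupp.single (b.1, b.2.erase v) (1 : ZMod 2)
      + Finsupp.single (Function.update b.1 v (b.1 v + 1), b.2.erase v) 1)

lemma dm_single (b : (V → ℤ) × Finset V) :
    dm V (Finsupp.single b 1)
      = ∑ v ∈ b.2, (Finsupp.single (b.1, b.2.erase v) (1 : ZMod 2)
        + Finsupp.single (Function.update b.1 v (b.1 v + 1), b.2.erase v) 1) := by
  simp [dm, Finsupp.lift_apply, Finsupp.sum_single_index]

def act (b : (V → ℤ) × Finset V) : Finset V :=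
  (Finset.univ.filter fun v => b.1 v ≠ 0) ∪ b.2

lemma mem_act {b : (V → ℤ) × Finset V} {v : V} :
    v ∈ act b ↔ (b.1 v ≠ 0 ∨ v ∈ b.2) := by
  simp [act]

lemma min'_subset_eq {S T : Finset V} [LinearOrder V] (hTS : T ⊆ S) (hS : S.Nonempty)
    (hT : T.Nonempty) (h : S.min' hS ∈ T) : T.min' hT = S.min' hS :=
  le_antisymm (Finset.min'_le T _ h) (Finset.min'_le S _ (hTS (Finset.min'_mem T _)))

end Model2

section Model3
set_option linter.unusedSectionVars false
variable {V : Type*} [LinearOrder V] [Fintype V] [DecidableEq V]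

noncomputable def Hb : (V → ℤ) × Finset V → Mdl V := fun b =>
  if hS : (act b).Nonempty then
    if (act b).min' hS ∈ b.2 then 0
    else
      (∑ m ∈ seg (b.1 ((act b).min' hS)),
        Finsupp.single (Function.update b.1 ((act b).min' hS) m,
          insert ((act b).min' hS) b.2) (1 : ZMod 2))
      + Hb (Function.update b.1 ((act b).min' hS) 0, b.2)
  else 0
termination_by b => (Finset.univ.filter fun v => b.1 v ≠ 0).card
decreasing_by
  rename_i hv
  rename_i b
  have hmem : (act b).min' hS ∈ act b := Finset.min'_mem _ _
  rw [mem_act] at hmem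
  have hne : b.1 ((act b).min' hS) ≠ 0 := by tauto
  have hfil : (Finset.univ.filter fun v => (Function.update b.1 ((act b).min' hS) 0) v ≠ 0)
      = (Finset.univ.filter fun v => b.1 v ≠ 0).erase ((act b).min' hS) := by
    ext w
    by_cases hw : w = (act b).min' hS <;>
      simp [Function.update_apply, hw]
  rw [hfil]
  exact Finset.card_erase_lt_of_mem (by simp [hne])

end Model3

section Model4
set_option linter.unusedSectionVars false
variable {V : Type*} [LinearOrder V] [Fintype V] [DecidableEq V]

lemma Hb_of_empty {b : (V → ℤ) × Finset V} (h : ¬ (act b).Nonempty) : Hb b = 0 := by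
  rw [Hb]; rw [dif_neg h]

lemma Hb_of_min_mem {b : (V → ℤ) × Finset V} (hS : (act b).Nonempty)
    (h : (act b).min' hS ∈ b.2) : Hb b = 0 := by
  rw [Hb]; rw [dif_pos hS, if_pos h]

lemma Hb_of_min_not_mem {b : (V → ℤ) × Finset V} (hS : (act b).Nonempty)
    (h : (act b).min' hS ∉ b.2) :
    Hb b = (∑ m ∈ seg (b.1 ((act b).min' hS)),
        Finsupp.single (Function.update b.1 ((act b).min' hS) m,
          insert ((act b).min' hS) b.2) (1 : ZMod 2))
      + Hb (Function.update b.1 ((act b).min' hS) 0, b.2) := by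
  rw [Hb]; rw [dif_pos hS, if_neg h]

end Model4

section Model5
set_option linter.unusedSectionVars false
variable {V : Type*} [LinearOrder V] [Fintype V] [DecidableEq V]

noncomputable def Hl (V : Type*) [LinearOrder V] [Fintype V] [DecidableEq V] :
    Mdl V →ₗ[ZMod 2] Mdl V :=
  Finsupp.lift (Mdl V) (ZMod 2) _ Hb

lemma Hl_single (b : (V → ℤ) × Finset V) :
    Hl V (Finsupp.single b 1) = Hb b := by
  simp [Hl, Finsupp.lift_apply, Finsupp.sum_single_index]

lemma act_sub {n : V → ℤ} {E F : Finset V} {v : V} {s : ℤ} (hF : F ⊆ E)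
    (hv : v ∈ act (n, E)) : act (Function.update n v s, F) ⊆ act (n, E) := by
  intro u hu; simp only [mem_act] at hu ⊢
  rcases hu with hu | hu
  · by_cases huv : u = v
    · subst huv; exact mem_act.mp hv
    · simp only [Function.update_apply, if_neg huv] at hu; exact Or.inl hu
  · exact Or.inr (hF hu)

lemma act_mono {n : V → ℤ} {E F : Finset V} (hF : F ⊆ E) : act (n, F) ⊆ act (n, E) := by
  intro u hu; rw [mem_act] at hu ⊢; exact hu.imp id (fun h => hF h)

def Pprop (b : (V → ℤ) × Finset V) : Prop :=
  dm V (Hb b) + Hl V (dm V (Finsupp.single b (1 : ZMod 2)))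
    = Finsupp.single b 1
      + (if b.2 = ∅ then Finsupp.single ((0 : V → ℤ), (∅ : Finset V)) (1 : ZMod 2) else 0)

lemma key_step (n : V → ℤ) (E : Finset V)
    (IH : ∀ b' : (V → ℤ) × Finset V,
      (Finset.univ.filter fun v => b'.1 v ≠ 0).card
        < (Finset.univ.filter fun v => n v ≠ 0).card → Pprop b') :
    Pprop (n, E) := by
  unfold Pprop
  by_cases hS : (act (n, E)).Nonempty
  · have hv₀mem : (act (n, E)).min' hS ∈ act (n, E) := Finset.min'_mem _ _
    by_cases hvE : (act (n, E)).min' hS ∈ E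
    · -- Case B : the minimal active vertex is in E
      have hEne : E ≠ ∅ := Finset.ne_empty_of_mem hvE
      rw [Hb_of_min_mem hS hvE, map_zero, zero_add, dm_single, map_sum]
      dsimp only
      rw [if_neg hEne, add_zero]
      have hsummand : ∀ v ∈ E,
          Hl V ((Finsupp.single (n, E.erase v) (1 : ZMod 2))
            + Finsupp.single (Function.update n v (n v + 1), E.erase v) 1)
          = Hb (n, E.erase v) + Hb (Function.update n v (n v + 1), E.erase v) := by
        intro v hv; rw [map_add, Hl_single, Hl_single]
      rw [Finset.sum_congr rfl hsummand]
      rw [← Finset.add_sum_erase _ _ hvE]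
      have herased : ∀ v ∈ E.erase ((act (n, E)).min' hS),
          Hb (n, E.erase v) + Hb (Function.update n v (n v + 1), E.erase v) = 0 := by
        intro v hv
        obtain ⟨hvne, hvE'⟩ := Finset.mem_erase.mp hv
        have hv₀' : (act (n, E)).min' hS ∈ E.erase v :=
          Finset.mem_erase.mpr ⟨fun h => hvne h.symm, hvE⟩
        have h1ne : (act (n, E.erase v)).Nonempty := ⟨_, mem_act.mpr (Or.inr hv₀')⟩
        have h1min : (act (n, E.erase v)).min' h1ne = (act (n, E)).min' hS :=
          min'_subset_eq (act_mono (Finset.erase_subset _ _)) hS h1ne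
            (mem_act.mpr (Or.inr hv₀'))
        have h2ne : (act (Function.update n v (n v + 1), E.erase v)).Nonempty :=
          ⟨_, mem_act.mpr (Or.inr hv₀')⟩
        have h2min : (act (Function.update n v (n v + 1), E.erase v)).min' h2ne
            = (act (n, E)).min' hS :=
          min'_subset_eq (act_sub (Finset.erase_subset _ _) (mem_act.mpr (Or.inr hvE')))
            hS h2ne (mem_act.mpr (Or.inr hv₀'))
        rw [Hb_of_min_mem h1ne (by rw [h1min]; exact hv₀'),
          Hb_of_min_mem h2ne (by rw [h2min]; exact hv₀'), add_zero]
      rw [Finset.sum_eq_zero herased, add_zero]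
      have hR : ∀ s : ℤ, Hb (Function.update n ((act (n, E)).min' hS) s,
            E.erase ((act (n, E)).min' hS))
          = (∑ m ∈ seg s, Finsupp.single
              (Function.update n ((act (n, E)).min' hS) m, E) (1 : ZMod 2))
            + Hb (Function.update n ((act (n, E)).min' hS) 0,
                E.erase ((act (n, E)).min' hS)) := by
        intro s
        by_cases hs : s = 0
        · subst hs; rw [seg_zero]; simp
        · have hmem : (act (n, E)).min' hS
              ∈ act (Function.update n ((act (n, E)).min' hS) s,
                  E.erase ((act (n, E)).min' hS)) :=
            mem_act.mpr (Or.inl (by simp [hs]))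
          have hne : (act (Function.update n ((act (n, E)).min' hS) s,
              E.erase ((act (n, E)).min' hS))).Nonempty := ⟨_, hmem⟩
          have hmin : (act (Function.update n ((act (n, E)).min' hS) s,
              E.erase ((act (n, E)).min' hS))).min' hne = (act (n, E)).min' hS :=
            min'_subset_eq (act_sub (Finset.erase_subset _ _) hv₀mem) hS hne hmem
          rw [Hb_of_min_not_mem hne (by rw [hmin]; exact Finset.notMem_erase _ _)]
          rw [hmin]
          dsimp only
          rw [Function.update_self]
          simp only [Function.update_idem, Finset.insert_erase hvE]
      have e1 : Hb (n, E.erase ((act (n, E)).min' hS))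
          = (∑ m ∈ seg (n ((act (n, E)).min' hS)), Finsupp.single
              (Function.update n ((act (n, E)).min' hS) m, E) (1 : ZMod 2))
            + Hb (Function.update n ((act (n, E)).min' hS) 0,
                E.erase ((act (n, E)).min' hS)) := by
        have h := hR (n ((act (n, E)).min' hS))
        rwa [Function.update_eq_self] at h
      rw [e1, hR (n ((act (n, E)).min' hS) + 1)]
      have hseg := sum_seg_succ (fun m => Finsupp.single
          (Function.update n ((act (n, E)).min' hS) m, E) (1 : ZMod 2))
          (n ((act (n, E)).min' hS))
      rw [Function.update_eq_self] at hseg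
      generalize (∑ m ∈ seg (n ((act (n, E)).min' hS)), Finsupp.single
          (Function.update n ((act (n, E)).min' hS) m, E) (1 : ZMod 2)) = X at hseg ⊢
      generalize (∑ m ∈ seg (n ((act (n, E)).min' hS) + 1), Finsupp.single
          (Function.update n ((act (n, E)).min' hS) m, E) (1 : ZMod 2)) = Y at hseg ⊢
      generalize Hb (Function.update n ((act (n, E)).min' hS) 0,
          E.erase ((act (n, E)).min' hS)) = R
      calc (X + R) + (Y + R) = (X + Y) + (R + R) := by abel
        _ = Finsupp.single (n, E) 1 := by rw [hseg, char2, add_zero]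
    · -- Case A : the minimal active vertex has nonzero coordinate
      have hn₀ : n ((act (n, E)).min' hS) ≠ 0 := by
        rcases mem_act.mp hv₀mem with h | h
        · exact h
        · exact absurd h hvE
      have hv₀notE : ∀ v ∈ E, v ≠ (act (n, E)).min' hS := by
        intro v hv h; exact hvE (h ▸ hv)
      -- expand the Hl ∘ dm part first
      rw [dm_single]
      dsimp only
      rw [map_sum]
      have hsummand : ∀ v ∈ E,
          Hl V ((Finsupp.single (n, E.erase v) (1 : ZMod 2))
            + Finsupp.single (Function.update n v (n v + 1), E.erase v) 1)
          = (∑ m ∈ seg (n ((act (n, E)).min' hS)),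
              (Finsupp.single (Function.update n ((act (n, E)).min' hS) m,
                  (insert ((act (n, E)).min' hS) E).erase v) (1 : ZMod 2)
               + Finsupp.single (Function.update
                    (Function.update n ((act (n, E)).min' hS) m) v (n v + 1),
                  (insert ((act (n, E)).min' hS) E).erase v) 1))
            + (Hb (Function.update n ((act (n, E)).min' hS) 0, E.erase v)
               + Hb (Function.update (Function.update n ((act (n, E)).min' hS) 0) v (n v + 1),
                   E.erase v)) := by
        intro v hv
        have hvne : v ≠ (act (n, E)).min' hS := hv₀notE v hv
        have hv₀ne : (act (n, E)).min' hS ≠ v := fun h => hvne h.symm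
        rw [map_add, Hl_single, Hl_single]
        have m1 : (act (n, E)).min' hS ∈ act (n, E.erase v) := mem_act.mpr (Or.inl hn₀)
        have ne1 : (act (n, E.erase v)).Nonempty := ⟨_, m1⟩
        have min1 : (act (n, E.erase v)).min' ne1 = (act (n, E)).min' hS :=
          min'_subset_eq (act_mono (Finset.erase_subset _ _)) hS ne1 m1
        rw [Hb_of_min_not_mem ne1
          (by rw [min1]; exact fun h => hvE (Finset.mem_of_mem_erase h))]
        rw [min1]
        have m2 : (act (n, E)).min' hS ∈ act (Function.update n v (n v + 1), E.erase v) :=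
          mem_act.mpr (Or.inl (by
            show Function.update n v (n v + 1) ((act (n, E)).min' hS) ≠ 0
            rw [Function.update_of_ne hv₀ne]; exact hn₀))
        have ne2 : (act (Function.update n v (n v + 1), E.erase v)).Nonempty := ⟨_, m2⟩
        have min2 : (act (Function.update n v (n v + 1), E.erase v)).min' ne2
            = (act (n, E)).min' hS :=
          min'_subset_eq (act_sub (Finset.erase_subset _ _) (mem_act.mpr (Or.inr hv)))
            hS ne2 m2
        rw [Hb_of_min_not_mem ne2
          (by rw [min2]; exact fun h => hvE (Finset.mem_of_mem_erase h))]
        rw [min2]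
        dsimp only
        rw [Function.update_of_ne hv₀ne (n v + 1) n]
        simp only [Function.update_comm hvne]
        rw [← Finset.erase_insert_of_ne hv₀ne, Finset.sum_add_distrib]
        abel
      rw [Finset.sum_congr rfl hsummand]
      rw [Finset.sum_add_distrib, Finset.sum_comm]
      have hrec : (∑ v ∈ E, (Hb (Function.update n ((act (n, E)).min' hS) 0, E.erase v)
            + Hb (Function.update (Function.update n ((act (n, E)).min' hS) 0) v (n v + 1),
                E.erase v)))
          = Hl V (dm V (Finsupp.single (Function.update n ((act (n, E)).min' hS) 0, E)
              (1 : ZMod 2))) := by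
        rw [dm_single]
        dsimp only
        rw [map_sum]
        refine Finset.sum_congr rfl fun v hv => ?_
        rw [map_add, Hl_single, Hl_single,
          Function.update_of_ne (hv₀notE v hv) (0 : ℤ) n]
      rw [hrec]
      -- now expand dm ∘ Hb
      rw [Hb_of_min_not_mem hS hvE, map_add, map_sum]
      have hdm : ∀ m : ℤ,
          dm V (Finsupp.single (Function.update n ((act (n, E)).min' hS) m,
              insert ((act (n, E)).min' hS) E) (1 : ZMod 2))
          = (Finsupp.single (Function.update n ((act (n, E)).min' hS) m, E) (1 : ZMod 2)
              + Finsupp.single (Function.update n ((act (n, E)).min' hS) (m + 1), E) 1)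
            + ∑ v ∈ E,
              (Finsupp.single (Function.update n ((act (n, E)).min' hS) m,
                  (insert ((act (n, E)).min' hS) E).erase v) (1 : ZMod 2)
               + Finsupp.single (Function.update
                    (Function.update n ((act (n, E)).min' hS) m) v (n v + 1),
                  (insert ((act (n, E)).min' hS) E).erase v) 1) := by
        intro m
        rw [dm_single]
        dsimp only
        rw [Finset.sum_insert hvE]
        congr 1
        · rw [Finset.erase_insert hvE, Function.update_self, Function.update_idem]
        · refine Finset.sum_congr rfl fun v hv => ?_
          rw [Function.update_of_ne (hv₀notE v hv) m n]
      rw [Finset.sum_congr rfl (fun m _ => hdm m), Finset.sum_add_distrib,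
        Finset.sum_add_distrib]
      have hpair : ((∑ m ∈ seg (n ((act (n, E)).min' hS)),
            Finsupp.single (Function.update n ((act (n, E)).min' hS) m, E) (1 : ZMod 2))
          + ∑ m ∈ seg (n ((act (n, E)).min' hS)),
            Finsupp.single (Function.update n ((act (n, E)).min' hS) (m + 1), E) (1 : ZMod 2))
          = Finsupp.single (Function.update n ((act (n, E)).min' hS) 0, E) 1
            + Finsupp.single (n, E) 1 := by
        have h := sum_seg_pair (fun m => Finsupp.single
            (Function.update n ((act (n, E)).min' hS) m, E) (1 : ZMod 2))
          (n ((act (n, E)).min' hS))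
        rwa [Function.update_eq_self] at h
      rw [hpair]
      -- apply the inductive hypothesis
      have hcard : (Finset.univ.filter fun v =>
            (Function.update n ((act (n, E)).min' hS) 0) v ≠ 0).card
          < (Finset.univ.filter fun v => n v ≠ 0).card := by
        have hfil : (Finset.univ.filter fun v =>
              (Function.update n ((act (n, E)).min' hS) 0) v ≠ 0)
            = (Finset.univ.filter fun v => n v ≠ 0).erase ((act (n, E)).min' hS) := by
          ext w
          by_cases hw : w = (act (n, E)).min' hS <;>
            simp [Function.update_apply, hw]
        rw [hfil]
        exact Finset.card_erase_lt_of_mem (by simp [hn₀])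
      have hIH := IH (Function.update n ((act (n, E)).min' hS) 0, E) hcard
      unfold Pprop at hIH
      dsimp only at hIH
      generalize hd : (if E = ∅ then Finsupp.single ((0 : V → ℤ), (∅ : Finset V))
          (1 : ZMod 2) else 0) = dd at hIH ⊢
      generalize (∑ m ∈ seg (n ((act (n, E)).min' hS)), ∑ v ∈ E,
          (Finsupp.single (Function.update n ((act (n, E)).min' hS) m,
              (insert ((act (n, E)).min' hS) E).erase v) (1 : ZMod 2)
           + Finsupp.single (Function.update
                (Function.update n ((act (n, E)).min' hS) m) v (n v + 1),
              (insert ((act (n, E)).min' hS) E).erase v) 1)) = X at hIH ⊢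
      generalize dm V (Hb (Function.update n ((act (n, E)).min' hS) 0, E)) = D at hIH ⊢
      generalize Hl V (dm V (Finsupp.single
          (Function.update n ((act (n, E)).min' hS) 0, E) (1 : ZMod 2))) = L at hIH ⊢
      generalize Finsupp.single (Function.update n ((act (n, E)).min' hS) 0, E)
          (1 : ZMod 2) = P1 at hIH ⊢
      generalize Finsupp.single ((n : V → ℤ), E) (1 : ZMod 2) = B at hIH ⊢
      calc (P1 + B + X + D) + (X + L)
          = (D + L) + (X + X) + P1 + B := by abel
        _ = (P1 + dd) + (X + X) + P1 + B := by rw [hIH]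
        _ = (P1 + P1) + (X + X) + B + dd := by abel
        _ = B + dd := by rw [char2, char2]; abel
  · -- trivial case : nothing active
    have hact : act (n, E) = ∅ := Finset.not_nonempty_iff_eq_empty.mp hS
    have hE : E = ∅ := by
      have : E ⊆ act (n, E) := fun u hu => mem_act.mpr (Or.inr hu)
      rw [hact] at this; exact Finset.subset_empty.mp this
    have hn : n = 0 := by
      funext v
      by_contra hv
      have : v ∈ act (n, E) := mem_act.mpr (Or.inl hv)
      rw [hact] at this; simp at this
    subst hE hn
    rw [Hb_of_empty hS, map_zero, zero_add, dm_single]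
    simp only [Finset.sum_empty, map_zero]
    simp only [if_true]
    rw [char2]
end Model5

section Model6
set_option linter.unusedSectionVars false
variable {V : Type*} [LinearOrder V] [Fintype V] [DecidableEq V]

noncomputable def Dl (V : Type*) [DecidableEq V] : Mdl V →ₗ[ZMod 2] Mdl V :=
  Finsupp.lift (Mdl V) (ZMod 2) _ fun b =>
    if b.2 = ∅ then Finsupp.single ((0 : V → ℤ), (∅ : Finset V)) 1 else 0

lemma Dl_single (b : (V → ℤ) × Finset V) :
    Dl V (Finsupp.single b 1)
      = if b.2 = ∅ then Finsupp.single ((0 : V → ℤ), (∅ : Finset V)) 1 else 0 := by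
  simp [Dl, Finsupp.lift_apply, Finsupp.sum_single_index]

lemma key_aux : ∀ (N : ℕ) (b : (V → ℤ) × Finset V),
    (Finset.univ.filter fun v => b.1 v ≠ 0).card ≤ N → Pprop b := by
  intro N
  induction N with
  | zero =>
    intro b hb
    have := key_step b.1 b.2
      (fun b' h => ((Nat.not_lt_zero _) (lt_of_lt_of_le h hb)).elim)
    rwa [Prod.mk.eta] at this
  | succ N ih =>
    intro b hb
    have := key_step b.1 b.2 (fun b' h => ih b' (by omega))
    rwa [Prod.mk.eta] at this

lemma key (b : (V → ℤ) × Finset V) : Pprop b := key_aux _ b le_rfl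

lemma homotopy :
    (dm V).comp (Hl V) + (Hl V).comp (dm V) = LinearMap.id + Dl V := by
  apply Finsupp.lhom_ext
  intro a b
  simp only [LinearMap.add_apply, LinearMap.comp_apply, LinearMap.id_apply]
  rw [show (Finsupp.single a b : Mdl V) = b • Finsupp.single a 1 by
    rw [Finsupp.smul_single, smul_eq_mul, mul_one]]
  rw [map_smul, map_smul, map_smul, map_smul, map_smul, ← smul_add, ← smul_add]
  congr 1
  have h := key a
  unfold Pprop at h
  rw [Hl_single, Dl_single]
  exact h

lemma homotopy_apply (x : Mdl V) :
    dm V (Hl V x) + Hl V (dm V x) = x + Dl V x := by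
  have h := homotopy (V := V)
  have := DFunLike.congr_fun h x
  simpa using this

end Model6

end Aux


section Graded
open Function
variable {V : Type*} [LinearOrder V] [Fintype V] [DecidableEq V]

/-- helper for extensionality of linear maps out of an `F₂`-Finsupp. -/
lemma lhom_ext1 {X : Type*} {W : Type*} [AddCommMonoid W] [Module (ZMod 2) W]
    {φ ψ : (X →₀ ZMod 2) →ₗ[ZMod 2] W}
    (h : ∀ a, φ (Finsupp.single a 1) = ψ (Finsupp.single a 1)) : φ = ψ := by
  apply Finsupp.lhom_ext
  intro a b
  rw [show (Finsupp.single a b : X →₀ ZMod 2) = b • Finsupp.single a 1 by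
    rw [Finsupp.smul_single, smul_eq_mul, mul_one], map_smul, map_smul, h]

def toK (M : V → V → ℤ) (K₀ : V → ℤ) (n : V → ℤ) : V → ℤ :=
  fun w => K₀ w + 2 * ∑ v, n v * M v w

lemma toK_mem (M : V → V → ℤ) (K₀ : V → ℤ) (n : V → ℤ) : CharCl M K₀ (toK M K₀ n) :=
  ⟨n, fun _ => rfl⟩

variable (M : V → V → ℤ) (K₀ : V → ℤ)
variable (σ : (V → ℤ) ≃ {K : V → ℤ // CharCl M K₀ K})
variable (hσ : ∀ n, (σ n).1 = toK M K₀ n)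

noncomputable def iotaL (k : ℕ) : Cbar M K₀ k →ₗ[ZMod 2] Mdl V :=
  Finsupp.lift (Mdl V) (ZMod 2) _ fun b => Finsupp.single (σ.symm b.1, b.2.1) 1

noncomputable def pimL (k : ℕ) : Mdl V →ₗ[ZMod 2] Cbar M K₀ k :=
  Finsupp.lift (Cbar M K₀ k) (ZMod 2) _ fun b =>
    if h : b.2.card = k then Finsupp.single (σ b.1, ⟨b.2, h⟩) 1 else 0

noncomputable def epsL : Cbar M K₀ 0 →ₗ[ZMod 2] ZMod 2 :=
  Finsupp.lift (ZMod 2) (ZMod 2) _ fun _ => 1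

lemma iotaL_single (k : ℕ) (b) :
    iotaL M K₀ σ k (Finsupp.single b 1) = Finsupp.single (σ.symm b.1, b.2.1) 1 := by
  simp [iotaL, Finsupp.lift_apply, Finsupp.sum_single_index]

lemma pimL_single (k : ℕ) (b) :
    pimL M K₀ σ k (Finsupp.single b 1)
      = if h : b.2.card = k then Finsupp.single (σ b.1, ⟨b.2, h⟩) 1 else 0 := by
  simp [pimL, Finsupp.lift_apply, Finsupp.sum_single_index]

lemma epsL_single (b) : epsL M K₀ (Finsupp.single b 1) = 1 := by
  simp [epsL, Finsupp.lift_apply, Finsupp.sum_single_index]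

lemma dbar_single (k : ℕ) (b) :
    dbar M K₀ k (Finsupp.single b 1)
      = ∑ v ∈ b.2.1.attach,
        (Finsupp.single
            (b.1, ⟨b.2.1.erase v.1, by rw [Finset.card_erase_of_mem v.2, b.2.2]; omega⟩) 1
         + Finsupp.single
            (⟨fun w => b.1.1 w + 2 * M v.1 w, charCl_addDual M K₀ b.1.1 b.1.2 v.1⟩,
             ⟨b.2.1.erase v.1, by rw [Finset.card_erase_of_mem v.2, b.2.2]; omega⟩) 1) := by
  simp [dbar, Finsupp.lift_apply, Finsupp.sum_single_index]

include hσ in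
lemma sigma_addDual (n : V → ℤ) (v : V) :
    σ (Function.update n v (n v + 1))
      = ⟨fun w => (σ n).1 w + 2 * M v w,
          charCl_addDual M K₀ (σ n).1 (σ n).2 v⟩ := by
  apply Subtype.ext
  rw [hσ]
  funext w
  have hs : ∑ u, (Function.update n v (n v + 1)) u * M u w
      = (∑ u, n u * M u w) + M v w := by
    have hterm : ∀ u, (Function.update n v (n v + 1)) u * M u w
        = n u * M u w + (if u = v then M u w else 0) := by
      intro u
      by_cases h : u = v
      · subst h; rw [Function.update_self, if_pos rfl]; ring
      · rw [Function.update_of_ne h, if_neg h, add_zero]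
    rw [Finset.sum_congr rfl fun u _ => hterm u, Finset.sum_add_distrib,
      Finset.sum_ite_eq' Finset.univ v (fun u => M u w), if_pos (Finset.mem_univ v)]
  show toK M K₀ (Function.update n v (n v + 1)) w = (σ n).1 w + 2 * M v w
  rw [hσ]
  show K₀ w + 2 * ∑ u, (Function.update n v (n v + 1)) u * M u w
      = toK M K₀ n w + 2 * M v w
  rw [hs]
  show K₀ w + 2 * ((∑ u, n u * M u w) + M v w) = (K₀ w + 2 * ∑ u, n u * M u w) + 2 * M v w
  ring

include hσ in
lemma sigma_symm_addDual (K : {K : V → ℤ // CharCl M K₀ K}) (v : V) :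
    σ.symm ⟨fun w => K.1 w + 2 * M v w, charCl_addDual M K₀ K.1 K.2 v⟩
      = Function.update (σ.symm K) v ((σ.symm K) v + 1) := by
  rw [Equiv.symm_apply_eq, sigma_addDual M K₀ σ hσ]
  apply Subtype.ext
  simp [Equiv.apply_symm_apply]

include hσ in
lemma pim_iota (k : ℕ) :
    (pimL M K₀ σ k).comp (iotaL M K₀ σ k) = LinearMap.id := by
  apply lhom_ext1
  intro b
  rw [LinearMap.comp_apply, iotaL_single, pimL_single, dif_pos b.2.2,
    LinearMap.id_apply]
  congr 1
  · exact Prod.ext (Equiv.apply_symm_apply σ b.1) (Subtype.ext rfl)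

include hσ in
lemma iota_dbar (k : ℕ) :
    (iotaL M K₀ σ k).comp (dbar M K₀ k) = (dm V).comp (iotaL M K₀ σ (k + 1)) := by
  apply lhom_ext1
  intro b
  rw [LinearMap.comp_apply, LinearMap.comp_apply, iotaL_single, dbar_single,
    map_sum, dm_single]
  dsimp only
  rw [← Finset.sum_attach b.2.1 (fun v => (Finsupp.single ((σ.symm b.1 : V → ℤ), b.2.1.erase v) (1 : ZMod 2)
    + Finsupp.single (Function.update (σ.symm b.1) v ((σ.symm b.1) v + 1), b.2.1.erase v) 1))]
  refine Finset.sum_congr rfl fun v _ => ?_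
  rw [map_add, iotaL_single, iotaL_single]
  dsimp only
  rw [sigma_symm_addDual M K₀ σ hσ]

include hσ in
lemma pim_dm (k : ℕ) :
    (pimL M K₀ σ k).comp (dm V) = (dbar M K₀ k).comp (pimL M K₀ σ (k + 1)) := by
  apply lhom_ext1
  intro b
  obtain ⟨n, F⟩ := b
  rw [LinearMap.comp_apply, LinearMap.comp_apply, dm_single, pimL_single, map_sum]
  dsimp only
  by_cases h : F.card = k + 1
  · rw [dif_pos h, dbar_single]
    dsimp only
    rw [← Finset.sum_attach F (fun v => (pimL M K₀ σ k)
      ((Finsupp.single ((n : V → ℤ), F.erase v) (1 : ZMod 2))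
        + Finsupp.single (Function.update n v (n v + 1), F.erase v) 1))]
    refine Finset.sum_congr rfl fun v _ => ?_
    rw [map_add, pimL_single, pimL_single]
    dsimp only
    have hc : (F.erase v.1).card = k := by
      rw [Finset.card_erase_of_mem v.2, h]
      omega
    rw [dif_pos hc, dif_pos hc, sigma_addDual M K₀ σ hσ]
  · rw [dif_neg h, map_zero]
    refine Finset.sum_eq_zero fun v hv => ?_
    rw [map_add, pimL_single, pimL_single]
    dsimp only
    have hc : ¬ (F.erase v).card = k := by
      rw [Finset.card_erase_of_mem hv]
      have : 0 < F.card := Finset.card_pos.mpr ⟨v, hv⟩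
      omega
    rw [dif_neg hc, dif_neg hc, add_zero]

lemma dm_iota0 : (dm V).comp (iotaL M K₀ σ 0) = 0 := by
  apply lhom_ext1
  intro b
  rw [LinearMap.comp_apply, iotaL_single, dm_single, LinearMap.zero_apply]
  dsimp only
  rw [Finset.card_eq_zero.mp b.2.2]
  exact Finset.sum_empty

lemma Dl_iota_pos (k : ℕ) : (Dl V).comp (iotaL M K₀ σ (k + 1)) = 0 := by
  apply lhom_ext1
  intro b
  rw [LinearMap.comp_apply, iotaL_single, LinearMap.zero_apply]
  have hne : b.2.1 ≠ ∅ := by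
    intro h
    have := b.2.2
    rw [h] at this
    simp at this
  simp [Dl, Finsupp.lift_apply, Finsupp.sum_single_index, hne]

lemma Dl_iota0 :
    (Dl V).comp (iotaL M K₀ σ 0)
      = (epsL M K₀).smulRight (Finsupp.single ((0 : V → ℤ), (∅ : Finset V)) 1) := by
  apply lhom_ext1
  intro b
  rw [LinearMap.comp_apply, iotaL_single, LinearMap.smulRight_apply, epsL_single,
    one_smul]
  have he : b.2.1 = ∅ := Finset.card_eq_zero.mp b.2.2
  simp [Dl, Finsupp.lift_apply, Finsupp.sum_single_index, he]

lemma eps_dbar : (epsL M K₀).comp (dbar M K₀ 0) = 0 := by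
  apply lhom_ext1
  intro b
  rw [LinearMap.comp_apply, dbar_single, map_sum, LinearMap.zero_apply]
  refine Finset.sum_eq_zero fun v _ => ?_
  rw [map_add, epsL_single, epsL_single]
  decide

end Graded


/-- the homology of the `U = 1` lattice complex is `𝔽` in degree `0` and
vanishes in positive degrees. -/
theorem stmt16 [Fintype V] [DecidableEq V] (M : V → V → ℤ)
    (hsym : ∀ v w, M v w = M w v)
    (hoff : ∀ v w, v ≠ w → M v w = 0 ∨ M v w = 1)
    (hneg : NegDef M)
    (K₀ : V → ℤ) (hK₀ : IsChar M K₀) :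
    Nonempty ((Cbar M K₀ 0 ⧸ LinearMap.range (dbar M K₀ 0)) ≃ₗ[ZMod 2] ZMod 2) ∧
    ∀ k : ℕ, LinearMap.ker (dbar M K₀ k) ≤ LinearMap.range (dbar M K₀ (k + 1)) := by
  classical
  letI : LinearOrder V := LinearOrder.lift' (Fintype.equivFin V) (Fintype.equivFin V).injective
  -- `toK` is injective by negative definiteness
  have hinj : Function.Injective (toK M K₀) := by
    intro a b hab
    by_contra hne
    set x : V → ℝ := fun v => (a v : ℝ) - (b v : ℝ) with hxdef
    have hx0 : x ≠ 0 := by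
      intro h0
      apply hne
      funext v
      have h1 := congrFun h0 v
      simp only [hxdef, Pi.zero_apply, sub_eq_zero] at h1
      exact_mod_cast h1
    have hrowZ : ∀ w, ∑ v, a v * M v w = ∑ v, b v * M v w := by
      intro w
      have h2 := congrFun hab w
      simp only [toK] at h2
      omega
    have hrow : ∀ w, (∑ v, (M v w : ℝ) * x v) = 0 := by
      intro w
      have h1 : (∑ v, (M v w : ℝ) * x v)
          = (∑ v, (a v : ℝ) * (M v w : ℝ)) - ∑ v, (b v : ℝ) * (M v w : ℝ) := by
        rw [← Finset.sum_sub_distrib]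
        refine Finset.sum_congr rfl fun v _ => ?_
        simp only [hxdef]; ring
      have h3 : ((∑ v, a v * M v w : ℤ) : ℝ) = ((∑ v, b v * M v w : ℤ) : ℝ) := by
        exact_mod_cast congrArg (fun t : ℤ => (t : ℝ)) (hrowZ w)
      push_cast at h3
      rw [h1, h3, sub_self]
    have hquad : (∑ v, ∑ w, (M v w : ℝ) * x v * x w) = 0 := by
      rw [Finset.sum_comm]
      refine Finset.sum_eq_zero fun w _ => ?_
      have h4 : ∑ v, (M v w : ℝ) * x v * x w = (∑ v, (M v w : ℝ) * x v) * x w := by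
        rw [Finset.sum_mul]
      rw [h4, hrow, zero_mul]
    exact absurd (hquad ▸ hneg x hx0) (lt_irrefl 0)
  have hbijθ : Function.Bijective
      (fun n : V → ℤ => (⟨toK M K₀ n, toK_mem M K₀ n⟩ : {K : V → ℤ // CharCl M K₀ K})) := by
    constructor
    · intro a b h
      exact hinj (congrArg Subtype.val h)
    · rintro ⟨K, hK⟩
      obtain ⟨n, hn⟩ := hK
      exact ⟨n, Subtype.ext (funext fun w => (hn w).symm)⟩
  set σ : (V → ℤ) ≃ {K : V → ℤ // CharCl M K₀ K} := Equiv.ofBijective _ hbijθ with hσdef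
  have hσ : ∀ n, (σ n).1 = toK M K₀ n := fun n => rfl
  constructor
  · -- degree 0 homology is 𝔽
    have hrange : LinearMap.range (dbar M K₀ 0) = LinearMap.ker (epsL M K₀) := by
      apply le_antisymm
      · rintro _ ⟨z, rfl⟩
        rw [LinearMap.mem_ker]
        have h := DFunLike.congr_fun (eps_dbar M K₀) z
        simpa using h
      · intro x hx
        rw [LinearMap.mem_ker] at hx
        set y := iotaL M K₀ σ 0 x with hy
        have hdy : dm V y = 0 := by
          have h := DFunLike.congr_fun (dm_iota0 M K₀ σ) x
          simpa using h
        have hDy : Dl V y = epsL M K₀ x • Finsupp.single ((0 : V → ℤ), (∅ : Finset V)) 1 := by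
          have h := DFunLike.congr_fun (Dl_iota0 M K₀ σ) x
          simpa using h
        have h := homotopy_apply y
        rw [hdy, map_zero, add_zero, hDy, hx, zero_smul, add_zero] at h
        refine ⟨pimL M K₀ σ 1 (Hl V y), ?_⟩
        have h1 := DFunLike.congr_fun (pim_dm M K₀ σ hσ 0) (Hl V y)
        simp only [LinearMap.comp_apply] at h1
        rw [← h1, h]
        have h2 := DFunLike.congr_fun (pim_iota M K₀ σ hσ 0) x
        simpa using h2
    have hsurj : Function.Surjective (epsL M K₀) := by
      intro c
      refine ⟨c • Finsupp.single (⟨K₀, ⟨0, fun w => by simp⟩⟩, ⟨∅, rfl⟩) 1, ?_⟩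
      rw [map_smul, epsL_single, smul_eq_mul, mul_one]
    exact ⟨(Submodule.quotEquivOfEq _ _ hrange).trans
      ((epsL M K₀).quotKerEquivOfSurjective hsurj)⟩
  · -- positive-degree homology vanishes
    intro k x hx
    rw [LinearMap.mem_ker] at hx
    set y := iotaL M K₀ σ (k + 1) x with hy
    have hdy : dm V y = 0 := by
      have h := DFunLike.congr_fun (iota_dbar M K₀ σ hσ k) x
      simp only [LinearMap.comp_apply] at h
      rw [← h, hx, map_zero]
    have hDy : Dl V y = 0 := by
      have h := DFunLike.congr_fun (Dl_iota_pos M K₀ σ k) x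
      simpa using h
    have hyy : dm V (Hl V y) = y := by
      have h := homotopy_apply y
      rwa [hdy, map_zero, add_zero, hDy, add_zero] at h
    refine ⟨pimL M K₀ σ (k + 2) (Hl V y), ?_⟩
    have h1 := DFunLike.congr_fun (pim_dm M K₀ σ hσ (k + 1)) (Hl V y)
    simp only [LinearMap.comp_apply] at h1
    rw [← h1, hyy]
    have h2 := DFunLike.congr_fun (pim_iota M K₀ σ hσ (k + 1)) x
    simpa using h2
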